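/- arXiv:1308.3821 — 2 statements merged into one kernel-verified Lean document; each statement's English description precedes it below -/
import Mathlib

section
/- For non-negative integers m, β with (m,β) ≠ (0,0), the coefficient of z^m in 1/((z;q)_β) equals the sum over b from 0 to β-1 of q^{bm} / ((q^{-b};q)_b · (q;q)_{β-1-b}). -/
open Finset

noncomputable section

/-- The base field `ℚ(q)`. -/
abbrev K : Type := RatFunc ℚ

/-- The indeterminate `q`. -/
noncomputable def q : K := RatFunc.X

/-- The q-Pochhammer symbol `(x;q)_n = ∏_{i=0}^{n-1} (1 - q^i x)` in `K`. -/
noncomputable def poch (x : K) (n : ℕ) : K := ∏ i ∈ Finset.range n, (1 - q ^ i * x)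

/-- The q-Pochhammer symbol `(z;q)_β` as a power series in `z`. -/
noncomputable def pochSeries (β : ℕ) : PowerSeries K :=
  ∏ i ∈ Finset.range β, (1 - PowerSeries.C (q ^ i) * PowerSeries.X)

lemma q_pow_inj : Function.Injective (fun n : ℕ => (q : K) ^ n) := by
  intro a b hab
  simp only [q, ← RatFunc.algebraMap_X (K := ℚ), ← map_pow] at hab
  have := RatFunc.algebraMap_injective ℚ hab
  have h2 := congrArg Polynomial.natDegree this
  simpa using h2

lemma q_ne_zero : (q : K) ≠ 0 := RatFunc.X_ne_zero

lemma factor_ne_zero {i b : ℕ} (h : i ≠ b) : (1 : K) - q ^ i * (q ^ b)⁻¹ ≠ 0 := by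
  intro hc
  apply h
  apply q_pow_inj
  have hb : (q : K) ^ b ≠ 0 := pow_ne_zero _ q_ne_zero
  have : (q : K) ^ i * (q ^ b)⁻¹ = 1 := by linear_combination -hc
  field_simp at this
  simpa using this

lemma poch_inv_ne_zero (b : ℕ) : poch ((q ^ b)⁻¹) b ≠ 0 := by
  unfold poch
  apply Finset.prod_ne_zero_iff.mpr
  intro i hi
  exact factor_ne_zero (Nat.ne_of_lt (Finset.mem_range.mp hi))

lemma poch_q_ne_zero (n : ℕ) : poch q n ≠ 0 := by
  unfold poch
  apply Finset.prod_ne_zero_iff.mpr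
  intro i hi
  have : (1 : K) - q ^ (i+1) * (q ^ 0)⁻¹ ≠ 0 := factor_ne_zero (by omega)
  simpa [pow_succ, mul_comm] using this

lemma prod_erase_eq {b β : ℕ} (hb : b < β) :
    ∏ i ∈ (Finset.range β).erase b, (1 - q ^ i * (q ^ b)⁻¹) =
      poch ((q ^ b)⁻¹) b * poch q (β - 1 - b) := by
  have hsplit : (Finset.range β).erase b = Finset.range b ∪ Finset.Ico (b+1) β := by
    ext i
    simp [Finset.mem_erase, Finset.mem_range, Finset.mem_Ico]
    omega
  have hdisj : Disjoint (Finset.range b) (Finset.Ico (b+1) β) := by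
    rw [Finset.disjoint_left]
    intro i hi hi2
    simp [Finset.mem_range, Finset.mem_Ico] at hi hi2
    omega
  rw [hsplit, Finset.prod_union hdisj]
  congr 1
  rw [Finset.prod_Ico_eq_prod_range]
  unfold poch
  apply Finset.prod_congr (by congr 1; omega)
  intro j _
  have hb0 : (q : K) ^ b ≠ 0 := pow_ne_zero _ q_ne_zero
  congr 1
  rw [show b + 1 + j = (j + 1) + b by omega, pow_add, mul_assoc,
    mul_inv_cancel₀ hb0, mul_one, pow_succ, mul_comm]

lemma poly_identity (β : ℕ) (hβ : 0 < β) :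
    ∑ b ∈ Finset.range β, Polynomial.C ((poch ((q^b)⁻¹) b * poch q (β-1-b))⁻¹) *
      ∏ i ∈ (Finset.range β).erase b, (1 - Polynomial.C (q^i) * Polynomial.X) = 1 := by
  set S : Polynomial K := ∑ b ∈ Finset.range β, Polynomial.C ((poch ((q^b)⁻¹) b * poch q (β-1-b))⁻¹) *
      ∏ i ∈ (Finset.range β).erase b, (1 - Polynomial.C (q^i) * Polynomial.X) with hS
  have key : S - 1 = 0 := by
    apply Polynomial.eq_zero_of_natDegree_lt_card_of_eval_eq_zero (S - 1)
      (f := fun c : Fin β => ((q : K) ^ (c : ℕ))⁻¹)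
    · intro a b hab
      exact Fin.val_injective (q_pow_inj (inv_inj.mp hab))
    · intro c
      have heval : S.eval ((q : K) ^ (c : ℕ))⁻¹ = 1 := by
        rw [hS, Polynomial.eval_finset_sum]
        rw [Finset.sum_eq_single (c : ℕ)]
        · rw [Polynomial.eval_mul, Polynomial.eval_C, Polynomial.eval_prod]
          have : ∀ i ∈ (Finset.range β).erase (c : ℕ),
              (1 - Polynomial.C (q^i) * Polynomial.X).eval ((q : K) ^ (c : ℕ))⁻¹
                = 1 - q ^ i * ((q : K) ^ (c : ℕ))⁻¹ := by
            intro i _; simp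
          rw [Finset.prod_congr rfl this, prod_erase_eq c.isLt]
          exact inv_mul_cancel₀ (mul_ne_zero (poch_inv_ne_zero _) (poch_q_ne_zero _))
        · intro b hb hbc
          rw [Polynomial.eval_mul, Polynomial.eval_prod]
          apply mul_eq_zero_of_right
          apply Finset.prod_eq_zero (i := (c : ℕ))
          · exact Finset.mem_erase.mpr ⟨fun hc => hbc hc.symm, Finset.mem_range.mpr c.isLt⟩
          · simp only [Polynomial.eval_sub, Polynomial.eval_one, Polynomial.eval_mul,
              Polynomial.eval_C, Polynomial.eval_X]
            rw [mul_inv_cancel₀ (pow_ne_zero (c:ℕ) q_ne_zero), sub_self]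
        · intro hc; exact absurd (Finset.mem_range.mpr c.isLt) hc
      simp [heval]
    · have hdegS : S.natDegree ≤ β - 1 := by
        apply Polynomial.natDegree_sum_le_of_forall_le
        intro b hb
        refine le_trans (Polynomial.natDegree_C_mul_le _ _) ?_
        refine le_trans (Polynomial.natDegree_prod_le _ _) ?_
        have : ∀ i ∈ (Finset.range β).erase b,
            (1 - Polynomial.C ((q:K)^i) * Polynomial.X).natDegree ≤ 1 := by
          intro i _
          have : (1 : Polynomial K) - Polynomial.C ((q:K)^i) * Polynomial.X
              = Polynomial.C (-(q^i)) * Polynomial.X + Polynomial.C 1 := by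
            ring_nf; simp [sub_eq_add_neg]; ring
          rw [this]
          exact Polynomial.natDegree_linear_le
        refine le_trans (Finset.sum_le_sum this) ?_
        rw [Finset.sum_const, smul_eq_mul, mul_one, Finset.card_erase_of_mem hb,
          Finset.card_range]
      have : (S - 1).natDegree ≤ β - 1 := by
        refine le_trans (Polynomial.natDegree_sub_le _ _) ?_
        simp [hdegS]
      calc (S - 1).natDegree ≤ β - 1 := this
        _ < β := by omega
        _ = Fintype.card (Fin β) := by simp
  exact sub_eq_zero.mp key

lemma geom_inv (a : K) :
    (1 - PowerSeries.C a * PowerSeries.X)⁻¹ = PowerSeries.mk (fun n => a ^ n) := by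
  rw [PowerSeries.inv_eq_iff_mul_eq_one (by simp)]
  ext n
  rw [mul_sub, mul_one, map_sub]
  cases n with
  | zero => simp
  | succ n =>
    rw [show PowerSeries.mk (fun n => a ^ n) * (PowerSeries.C a * PowerSeries.X)
        = (PowerSeries.mk (fun n => a ^ n) * PowerSeries.C a) * PowerSeries.X by ring,
      PowerSeries.coeff_succ_mul_X, PowerSeries.coeff_mul_C]
    simp [pow_succ, PowerSeries.coeff_one]

lemma constantCoeff_prod_erase (β b : ℕ) :
    PowerSeries.constantCoeff
      (∏ i ∈ (Finset.range β).erase b, (1 - PowerSeries.C (q^i) * PowerSeries.X)) ≠ 0 := by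
  rw [map_prod]
  apply Finset.prod_ne_zero_iff.mpr
  intro i _
  simp

/-- for `(m,β) ≠ (0,0)`, the coefficient of `z^m` in `1/((z;q)_β)` equals
`Σ_{b=0}^{β-1} q^{bm} / ((q^{-b};q)_b (q;q)_{β-1-b})`. -/
theorem coeff_inv_pochSeries_partial_fractions (m β : ℕ) (h : (m, β) ≠ (0, 0)) :
    PowerSeries.coeff m (pochSeries β)⁻¹ =
      ∑ b ∈ Finset.range β,
        q ^ (b * m) / (poch ((q ^ b)⁻¹) b * poch q (β - 1 - b)) := by
  rcases Nat.eq_zero_or_pos β with hβ | hβ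
  · subst hβ
    have hm : m ≠ 0 := by
      intro hm; exact h (by simp [hm])
    have h1 : pochSeries 0 = 1 := by simp [pochSeries]
    rw [h1, show (1 : PowerSeries K)⁻¹ = 1 by
      rw [PowerSeries.inv_eq_iff_mul_eq_one (by simp)]; simp]
    simp [PowerSeries.coeff_one, hm]
  · have hps := congrArg (Polynomial.coeToPowerSeries.ringHom (R := K)) (poly_identity β hβ)
    simp only [map_sum, map_mul, map_prod, map_sub, map_one,
      Polynomial.coeToPowerSeries.ringHom_apply, Polynomial.coe_C, Polynomial.coe_X] at hps
    have main : (pochSeries β)⁻¹ =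
        ∑ b ∈ Finset.range β,
          PowerSeries.C ((poch ((q^b)⁻¹) b * poch q (β-1-b))⁻¹) *
            PowerSeries.mk (fun n => ((q:K)^b) ^ n) := by
      calc (pochSeries β)⁻¹ = 1 * (pochSeries β)⁻¹ := (one_mul _).symm
        _ = (∑ b ∈ Finset.range β,
              PowerSeries.C ((poch ((q^b)⁻¹) b * poch q (β-1-b))⁻¹) *
              ∏ i ∈ (Finset.range β).erase b,
                (1 - PowerSeries.C (q^i) * PowerSeries.X)) * (pochSeries β)⁻¹ := by
            rw [hps]
        _ = ∑ b ∈ Finset.range β,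
              PowerSeries.C ((poch ((q^b)⁻¹) b * poch q (β-1-b))⁻¹) *
              ((∏ i ∈ (Finset.range β).erase b,
                (1 - PowerSeries.C (q^i) * PowerSeries.X)) * (pochSeries β)⁻¹) := by
            rw [Finset.sum_mul]; apply Finset.sum_congr rfl; intro b _; ring
        _ = _ := by
            apply Finset.sum_congr rfl
            intro b hb
            congr 1
            have hfac : pochSeries β =
                (1 - PowerSeries.C ((q:K)^b) * PowerSeries.X) *
                  ∏ i ∈ (Finset.range β).erase b,
                    (1 - PowerSeries.C (q^i) * PowerSeries.X) :=
              (Finset.mul_prod_erase _ _ hb).symm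
            rw [hfac, PowerSeries.mul_inv_rev, ← mul_assoc,
              PowerSeries.mul_inv_cancel _ (constantCoeff_prod_erase β b), one_mul,
              geom_inv]
    rw [main, map_sum]
    apply Finset.sum_congr rfl
    intro b _
    rw [PowerSeries.coeff_C_mul, PowerSeries.coeff_mk, ← pow_mul, div_eq_mul_inv, mul_comm]
end
end

section
/- If μ is a partition with |μ| = |ρ| where ρ = ((k+1)^t, k^s) is an almost rectangular partition (k, s ≥ 1, t ≥ 0), then μ ≥ ρ in dominance order if and only if the length of μ is at most s + t. -/
open Finset

/-- The almost rectangular partition `ρ = ((k+1)^t, k^s)` (0-indexed parts). -/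
def rho (k s t : ℕ) : ℕ → ℕ := fun i => if i < t then k + 1 else if i < t + s then k else 0

lemma rho_sum (k s t m : ℕ) :
    ∑ j ∈ Finset.range m, rho k s t j = min m t + min m (t + s) * k := by
  induction m with
  | zero => simp
  | succ m ih =>
    rw [Finset.sum_range_succ, ih]
    show _ + (if m < t then k + 1 else if m < t + s then k else 0) = _
    rcases lt_or_ge m t with h | h
    · have e1 : min m t = m := by omega
      have e2 : min m (t + s) = m := by omega
      have e3 : min (m + 1) t = m + 1 := by omega
      have e4 : min (m + 1) (t + s) = m + 1 := by omega
      rw [if_pos h, e1, e2, e3, e4]; ring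
    · rcases lt_or_ge m (t + s) with h2 | h2
      · have e1 : min m t = t := by omega
        have e2 : min m (t + s) = m := by omega
        have e3 : min (m + 1) t = t := by omega
        have e4 : min (m + 1) (t + s) = m + 1 := by omega
        rw [if_neg (by omega), if_pos h2, e1, e2, e3, e4]; ring
      · have e1 : min m t = t := by omega
        have e2 : min m (t + s) = t + s := by omega
        have e3 : min (m + 1) t = t := by omega
        have e4 : min (m + 1) (t + s) = t + s := by omega
        rw [if_neg (by omega), if_neg (by omega), e1, e2, e3, e4]; ring

/-- a partition `μ` of the same weight as the almost rectangular
partition `ρ = ((k+1)^t, k^s)` (where `k, s ≥ 1`, `t ≥ 0`) dominates `ρ` if and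
only if `μ` has at most `s + t` nonzero parts.

Here `μ` is given as a finitely supported weakly decreasing function `ℕ →₀ ℕ`
(its parts, 0-indexed), its weight is the sum of its parts, its length is the
number of nonzero parts, and `μ ≥ ρ` means every partial sum of parts of `μ`
is at least the corresponding partial sum of `ρ`. -/
theorem dominates_almost_rectangular_iff (k s t : ℕ) (hk : 1 ≤ k) (hs : 1 ≤ s)
    (μ : ℕ →₀ ℕ) (hμ : Antitone (μ : ℕ → ℕ))
    (hw : μ.sum (fun _ m => m) = t * (k + 1) + s * k) :
    (∀ i : ℕ, ∑ j ∈ Finset.range (i + 1), rho k s t j ≤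
        ∑ j ∈ Finset.range (i + 1), μ j) ↔
      μ.support.card ≤ s + t := by
  set n := s + t with hn
  have hsum_supp : μ.sum (fun _ m => m) = ∑ j ∈ μ.support, μ j := rfl
  have hle_total : ∀ m, ∑ j ∈ Finset.range m, μ j ≤ t * (k + 1) + s * k := by
    intro m
    rw [← hw, hsum_supp]
    calc ∑ j ∈ Finset.range m, μ j ≤ ∑ j ∈ Finset.range m ∪ μ.support, μ j :=
          Finset.sum_le_sum_of_subset Finset.subset_union_left
      _ = ∑ j ∈ μ.support, μ j :=
          (Finset.sum_subset Finset.subset_union_right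
            (fun x _ hx => Finsupp.notMem_support_iff.1 hx)).symm
  have hzero : ∀ j, μ.support.card ≤ j → μ j = 0 := by
    intro j hj
    by_contra h0
    have hsub : Finset.range (j + 1) ⊆ μ.support := by
      intro i hi
      rw [Finset.mem_range] at hi
      rw [Finsupp.mem_support_iff]
      intro hz
      exact h0 (Nat.le_zero.1 (hz ▸ hμ (Nat.lt_succ_iff.1 hi)))
    have := Finset.card_le_card hsub
    rw [Finset.card_range] at this
    omega
  have hN : t * (k + 1) + s * k = t + n * k := by rw [hn]; ring
  constructor
  · intro hdom
    by_contra hcard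
    push_neg at hcard
    have hnsub : ¬ μ.support ⊆ Finset.range n := by
      intro hsub
      have := Finset.card_le_card hsub
      rw [Finset.card_range] at this
      omega
    obtain ⟨j, hjs, hjn⟩ := Finset.not_subset.1 hnsub
    rw [Finset.mem_range, not_lt] at hjn
    have hμn : 1 ≤ μ n :=
      le_trans (Nat.one_le_iff_ne_zero.2 (Finsupp.mem_support_iff.1 hjs)) (hμ hjn)
    have hd := hdom (n - 1)
    have hn1 : n - 1 + 1 = n := by omega
    rw [hn1, rho_sum] at hd
    have e1 : min n t = t := by omega
    have e2 : min n (t + s) = n := by omega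
    rw [e1, e2] at hd
    have h2 := hle_total (n + 1)
    rw [Finset.sum_range_succ] at h2
    linarith [hd, h2, hμn]
  · intro hcard
    have htot : ∀ m, n ≤ m → ∑ j ∈ Finset.range m, μ j = t * (k + 1) + s * k := by
      intro m hm
      rw [← hw, hsum_supp]
      symm
      apply Finset.sum_subset
      · intro x hx
        rw [Finset.mem_range]
        by_contra hcx
        push_neg at hcx
        exact Finsupp.mem_support_iff.1 hx (hzero x (by omega))
      · intro x _ hx
        exact Finsupp.notMem_support_iff.1 hx
    intro i
    rw [rho_sum]
    set m := i + 1 with hm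
    rcases le_or_gt n m with hnm | hmn
    · rw [htot m hnm]
      have hN2 : t * (k + 1) + s * k = t + (t + s) * k := by ring
      rw [hN2]
      exact Nat.add_le_add (min_le_right _ _) (Nat.mul_le_mul_right k (min_le_right _ _))
    · by_contra hlt
      push_neg at hlt
      have hm1 : 1 ≤ m := by omega
      have hmin2 : min m (t + s) = m := by omega
      rw [hmin2] at hlt
      have hlow : m * μ (m - 1) ≤ ∑ j ∈ Finset.range m, μ j := by
        calc m * μ (m - 1) = ∑ _j ∈ Finset.range m, μ (m - 1) := by
              rw [Finset.sum_const, Finset.card_range, smul_eq_mul]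
          _ ≤ ∑ j ∈ Finset.range m, μ j :=
              Finset.sum_le_sum (fun j hj => hμ (by rw [Finset.mem_range] at hj; omega))
      have hμk : μ (m - 1) ≤ k := by
        by_contra hc
        push_neg at hc
        have h3 : m * (k + 1) ≤ m * μ (m - 1) := Nat.mul_le_mul_left m hc
        have h4 : min m t ≤ m := min_le_left _ _
        have h5 : m * (k + 1) = m * k + m := by ring
        linarith [hlt, hlow]
      have hsplit : ∑ j ∈ Finset.range m, μ j + ∑ j ∈ Finset.Ico m n, μ j =
          ∑ j ∈ Finset.range n, μ j := by
        rw [Finset.range_eq_Ico, Finset.range_eq_Ico]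
        exact Finset.sum_Ico_consecutive (fun j => μ j) (Nat.zero_le m) hmn.le
      have hIco : ∑ j ∈ Finset.Ico m n, μ j ≤ (n - m) * k := by
        calc ∑ j ∈ Finset.Ico m n, μ j ≤ ∑ _j ∈ Finset.Ico m n, k :=
              Finset.sum_le_sum (fun j hj =>
                le_trans (hμ (show m - 1 ≤ j by rw [Finset.mem_Ico] at hj; omega)) hμk)
          _ = (n - m) * k := by rw [Finset.sum_const, Nat.card_Ico, smul_eq_mul]
      have htotn := htot n le_rfl
      have hk2 : m * k + (n - m) * k = n * k := by
        rw [← Nat.add_mul]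
        congr 1
        omega
      have hminle : min m t ≤ t := min_le_right _ _
      linarith [hlt, hIco, htotn, hsplit, hk2, hN, hminle]
end
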